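/- Let (Q_k) be mutually orthogonal finite-rank projections on a separable Hilbert space H with Σ_k Q_k = I strongly, and (α_k) real with |α_k| nondecreasing and |α_k| → ∞. If a ∈ B(H) satisfies Σ_k |α_k| ‖[Q_k,a]‖ < ∞, then [D,a] extends to a bounded (indeed compact) operator, where D = Σ_k α_k Q_k. -/

import Mathlib

open Filter Topology

/-- A continuous linear map whose values lie in a finite-dimensional submodule is a
compact operator. -/
lemma isCompactOperator_of_mem_finiteDimensional {H : Type*} [NormedAddCommGroup H]
    [NormedSpace ℂ H] (f : H →L[ℂ] H) (V : Submodule ℂ H) [FiniteDimensional ℂ V]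
    (h : ∀ x, f x ∈ V) : IsCompactOperator f := by
  haveI : ProperSpace V := FiniteDimensional.proper ℂ V
  refine ⟨Subtype.val '' Metric.closedBall (0 : V) ‖f‖,
    (isCompact_closedBall _ _).image continuous_subtype_val, ?_⟩
  refine Filter.mem_of_superset (Metric.ball_mem_nhds 0 one_pos) ?_
  intro x hx
  refine ⟨⟨f x, h x⟩, ?_, rfl⟩
  simp only [Metric.mem_closedBall, dist_zero_right]
  calc ‖(⟨f x, h x⟩ : V)‖ = ‖f x‖ := rfl
    _ ≤ ‖f‖ * ‖x‖ := f.le_opNorm x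
    _ ≤ ‖f‖ * 1 := by
        have := (Metric.mem_ball.1 hx)
        rw [dist_zero_right] at this
        exact mul_le_mul_of_nonneg_left this.le (norm_nonneg f)
    _ = ‖f‖ := mul_one _

set_option maxHeartbeats 1000000 in
/-- For mutually orthogonal finite-rank projections `Q k` summing
strongly to `I`, reals `α k` with `|α k|` nondecreasing to `∞` and `a ∈ B(H)` with
`Σ_k |α_k| ‖[Q_k,a]‖ < ∞`, the commutator `[D,a]` (where `D = Σ α_k Q_k`) extends
to a bounded, indeed compact, operator `B`; the extension property is expressed by
`Q_i (B x) = (α_i - α_j) • Q_i (a x)` for `x` in the range of `Q_j`. -/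
theorem stmt14 {H : Type*} [NormedAddCommGroup H] [InnerProductSpace ℂ H]
    [CompleteSpace H] [TopologicalSpace.SeparableSpace H]
    (Q : ℕ → H →L[ℂ] H)
    (hproj : ∀ k, IsSelfAdjoint (Q k) ∧ IsIdempotentElem (Q k))
    (hrank : ∀ k, FiniteDimensional ℂ (LinearMap.range (Q k : H →ₗ[ℂ] H)))
    (horth : ∀ i j, i ≠ j → Q i ∘L Q j = 0)
    (hsum : ∀ x : H, Tendsto (fun N => ∑ k ∈ Finset.range N, Q k x) atTop (𝓝 x))
    (α : ℕ → ℝ) (hmono : Monotone fun k => |α k|)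
    (hα : Tendsto (fun k => |α k|) atTop atTop)
    (a : H →L[ℂ] H)
    (hsummable : Summable fun k => |α k| * ‖Q k ∘L a - a ∘L Q k‖) :
    ∃ B : H →L[ℂ] H, IsCompactOperator B ∧
      ∀ j (x : H), Q j x = x → ∀ i,
        Q i (B x) = (((α i - α j : ℝ)) : ℂ) • Q i (a x) := by
  -- The series of operators
  set T : ℕ → H →L[ℂ] H := fun k => ((α k : ℂ)) • (Q k ∘L a - a ∘L Q k) with hT
  have hTnorm : ∀ k, ‖T k‖ = |α k| * ‖Q k ∘L a - a ∘L Q k‖ := by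
    intro k
    rw [hT]
    simp [norm_smul, Complex.norm_real, Real.norm_eq_abs]
  have hTsummable : Summable T := by
    refine Summable.of_norm ?_
    simpa only [hTnorm] using hsummable
  have hTx : ∀ k (y : H), T k y = (α k : ℂ) • (Q k (a y) - a (Q k y)) := fun _ _ => rfl
  have hTc : ∀ k, IsCompactOperator (T k) := by
    have hQc : ∀ k, IsCompactOperator (Q k) := fun k => by
      haveI := hrank k
      exact isCompactOperator_of_mem_finiteDimensional (Q k) (LinearMap.range (Q k : H →ₗ[ℂ] H))
        (fun x => LinearMap.mem_range_self (Q k : H →ₗ[ℂ] H) x)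
    intro k
    have h1 : IsCompactOperator (Q k ∘L a) := by
      have := (hQc k).comp_clm a
      rwa [show ⇑(Q k) ∘ ⇑a = ⇑(Q k ∘L a) from rfl] at this
    have h2 : IsCompactOperator (a ∘L Q k) := by
      have := (hQc k).continuous_comp a.continuous
      rwa [show ⇑a ∘ ⇑(Q k) = ⇑(a ∘L Q k) from rfl] at this
    have h3 : IsCompactOperator (Q k ∘L a - a ∘L Q k) := by
      have := h1.sub h2
      rwa [show ⇑(Q k ∘L a) - ⇑(a ∘L Q k) = ⇑(Q k ∘L a - a ∘L Q k) from rfl] at this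
    have := h3.smul ((α k : ℂ))
    rwa [show (α k : ℂ) • ⇑(Q k ∘L a - a ∘L Q k) = ⇑(T k) from rfl] at this
  clear_value T
  clear hT
  obtain ⟨B, hB⟩ := hTsummable
  refine ⟨B, ?_, ?_⟩
  · -- compactness
    have hsumc : ∀ N : ℕ, IsCompactOperator (⇑(∑ k ∈ Finset.range N, T k)) := by
      intro N
      induction N with
      | zero =>
          rw [Finset.range_zero, Finset.sum_empty, ContinuousLinearMap.coe_zero']
          exact isCompactOperator_zero
      | succ n ih =>
          rw [Finset.sum_range_succ, ContinuousLinearMap.coe_add']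
          exact ih.add (hTc n)
    exact isCompactOperator_of_tendsto hB.tendsto_sum_nat (Eventually.of_forall hsumc)
  · -- the extension property
    intro j x hx i
    have hBx : HasSum (fun k => T k x) (B x) :=
      (ContinuousLinearMap.apply ℂ H x).hasSum hB
    have hQiBx : HasSum (fun k => Q i (T k x)) (Q i (B x)) := (Q i).hasSum hBx
    -- identify each term
    have hQQ : ∀ k y, Q i (Q k y) = if k = i then Q i y else 0 := by
      intro k y
      by_cases hk : k = i
      · subst hk
        simp only [if_pos rfl]
        exact DFunLike.congr_fun (hproj k).2 y
      · rw [if_neg hk]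
        have : (Q i ∘L Q k) y = 0 := by rw [horth i k (Ne.symm hk)]; rfl
        exact this
    have hQx : ∀ k, Q k x = if k = j then x else 0 := by
      intro k
      by_cases hk : k = j
      · subst hk; rw [if_pos rfl, hx]
      · rw [if_neg hk]
        have : (Q k ∘L Q j) x = 0 := by rw [horth k j hk]; rfl
        rw [← hx]
        exact this
    have hterm : (fun k => Q i (T k x)) = fun k =>
        (if k = i then ((α i : ℂ)) • Q i (a x) else 0) -
        (if k = j then ((α j : ℂ)) • Q i (a x) else 0) := by
      funext k
      rw [hTx k x, map_smul, map_sub, hQQ k (a x), hQx k]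
      by_cases hki : k = i <;> by_cases hkj : k = j
      · subst hki; subst hkj; simp
      · subst hki; simp [hkj]
      · subst hkj; simp [hki, smul_sub]
      · simp [hki, hkj]
    rw [hterm] at hQiBx
    have htarget : HasSum (fun k =>
        (if k = i then ((α i : ℂ)) • Q i (a x) else 0) -
        (if k = j then ((α j : ℂ)) • Q i (a x) else 0))
        (((α i : ℂ)) • Q i (a x) - ((α j : ℂ)) • Q i (a x)) :=
      (hasSum_ite_eq i _).sub (hasSum_ite_eq j _)
    have := hQiBx.unique htarget
    rw [this]
    push_cast
    rw [sub_smul]
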